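/- arXiv:1704.08927 — 3 statements merged into one kernel-verified Lean document; each statement's English description precedes it below -/
import Mathlib

section
/- Let H be a nontrivial complex Hilbert space, Q : H → H the orthogonal projection onto a closed subspace, Q^⊥ = Id − Q, and let T : H → H be a bounded self-adjoint linear operator with ‖T‖ ≤ 1. Suppose u ∈ H satisfies ‖u‖ = 1 and T u = λ u for some λ ∈ ℝ. If ‖Q^⊥ u‖ < ε for some ε with 0 < ε < 1, then the operator T_Q := Q T Q has a spectral value λ_Q ∈ spectrum(T_Q) that is real and satisfies |λ − λ_Q| < ε / √(1 − ε²). -/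
lemma aux_resolvent_bound {H : Type*} [NormedAddCommGroup H] [InnerProductSpace ℂ H]
    [CompleteSpace H] (S : H →L[ℂ] H) (hS : IsSelfAdjoint S) (lam : ℝ) (δ : ℝ) (hδ : 0 < δ)
    (h : ∀ z ∈ spectrum ℂ S, δ ≤ ‖z - (lam : ℂ)‖) (x : H) :
    δ * ‖x‖ ≤ ‖S x - (lam : ℂ) • x‖ := by
  have hnormal : IsStarNormal S := hS.isStarNormal
  have hne : ∀ z ∈ spectrum ℂ S, z - (lam : ℂ) ≠ 0 := fun z hz => by
    intro h0
    have := h z hz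
    rw [h0, norm_zero] at this
    linarith
  set f : ℂ → ℂ := fun z => (z - (lam : ℂ))⁻¹ with hf
  have hfc : ContinuousOn f (spectrum ℂ S) :=
    ((continuous_id.sub continuous_const).continuousOn).inv₀ hne
  set B : H →L[ℂ] H := cfc f S with hB
  have hsub : S - algebraMap ℂ (H →L[ℂ] H) (lam : ℂ) = cfc (fun z : ℂ => z - (lam : ℂ)) S := by
    rw [cfc_sub (fun z : ℂ => z) (fun _ : ℂ => (lam : ℂ)) S, cfc_id' ℂ S, cfc_const ((lam : ℝ) : ℂ) S]
  have hB1 : B * (S - algebraMap ℂ (H →L[ℂ] H) (lam : ℂ)) = 1 := by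
    rw [hsub, hB, ← cfc_mul f (fun z : ℂ => z - (lam : ℂ)) S]
    rw [show (fun z => f z * (z - (lam:ℂ))) = fun z => f z * (z - (lam:ℂ)) from rfl]
    rw [← cfc_one ℂ S]
    exact cfc_congr fun z hz => inv_mul_cancel₀ (hne z hz)
  have hBnorm : ‖B‖ ≤ δ⁻¹ := by
    apply norm_cfc_le (by positivity)
    intro z hz
    rw [hf]
    simp only [norm_inv]
    exact inv_anti₀ hδ (h z hz)
  have happ : B (S x - (lam : ℂ) • x) = x := by
    have : (B * (S - algebraMap ℂ (H →L[ℂ] H) (lam : ℂ))) x = x := by rw [hB1]; rfl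
    simpa [ContinuousLinearMap.mul_apply, ContinuousLinearMap.sub_apply,
      Algebra.algebraMap_eq_smul_one, ContinuousLinearMap.smul_apply] using this
  have : ‖x‖ ≤ δ⁻¹ * ‖S x - (lam : ℂ) • x‖ := by
    calc ‖x‖ = ‖B (S x - (lam : ℂ) • x)‖ := by rw [happ]
    _ ≤ ‖B‖ * ‖S x - (lam : ℂ) • x‖ := B.le_opNorm _
    _ ≤ δ⁻¹ * ‖S x - (lam : ℂ) • x‖ := by
        exact mul_le_mul_of_nonneg_right hBnorm (norm_nonneg _)
  calc δ * ‖x‖ ≤ δ * (δ⁻¹ * ‖S x - (lam : ℂ) • x‖) := by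
        exact mul_le_mul_of_nonneg_left this hδ.le
  _ = ‖S x - (lam : ℂ) • x‖ := by field_simp

/-- Eigenvalue perturbation lemma: if `Q` is an orthogonal projection (a self-adjoint
idempotent bounded operator) on a nontrivial complex Hilbert space, `T` is a self-adjoint
non-expansive bounded operator, and `u` is a unit eigenvector of `T` with real eigenvalue `λ`
such that `‖Q^⊥ u‖ < ε` for some `0 < ε < 1`, then `T_Q = Q T Q` has a real spectral value
`λ_Q` with `|λ - λ_Q| < ε / √(1 - ε²)`. -/
theorem eigenvalue_perturbation_of_projection
    {H : Type*} [NormedAddCommGroup H] [InnerProductSpace ℂ H] [CompleteSpace H] [Nontrivial H]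
    (Q : H →L[ℂ] H) (hQidem : Q ∘L Q = Q) (hQsa : IsSelfAdjoint Q)
    (T : H →L[ℂ] H) (hTsa : IsSelfAdjoint T) (hTnorm : ‖T‖ ≤ 1)
    (u : H) (hu : ‖u‖ = 1) (lam : ℝ) (hTu : T u = (lam : ℂ) • u)
    (ε : ℝ) (hε0 : 0 < ε) (hε1 : ε < 1) (hQu : ‖u - Q u‖ < ε) :
    ∃ lamQ : ℝ, (lamQ : ℂ) ∈ spectrum ℂ (Q ∘L T ∘L Q) ∧
      |lam - lamQ| < ε / Real.sqrt (1 - ε ^ 2) := by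
  set S := Q ∘L T ∘L Q with hSdef
  -- S is self-adjoint
  have hSsa : IsSelfAdjoint S := by
    have h1 : S = Q * T * Q := by rw [hSdef]; rfl
    rw [h1]
    simpa [IsSelfAdjoint, star_mul, mul_assoc, hQsa.star_eq, hTsa.star_eq] using rfl
  -- Q applied twice
  have hQQ : ∀ x : H, Q (Q x) = Q x := fun x => DFunLike.congr_fun hQidem x
  -- ‖Q‖ ≤ 1
  have hQnorm : ∀ x : H, ‖Q x‖ ≤ ‖x‖ := by
    intro x
    have h2 : ‖Q‖ * ‖Q‖ = ‖Q‖ := by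
      have := CStarRing.norm_star_mul_self (x := Q)
      rw [hQsa.star_eq] at this
      calc ‖Q‖ * ‖Q‖ = ‖Q * Q‖ := this.symm
      _ = ‖Q‖ := by rw [show Q * Q = Q from hQidem]
    have hQle : ‖Q‖ ≤ 1 := by nlinarith [norm_nonneg Q]
    calc ‖Q x‖ ≤ ‖Q‖ * ‖x‖ := Q.le_opNorm x
    _ ≤ 1 * ‖x‖ := mul_le_mul_of_nonneg_right hQle (norm_nonneg x)
    _ = ‖x‖ := one_mul _
  set e := u - Q u with he
  set v := Q u with hv
  -- orthogonality
  have horth : (inner ℂ e v : ℂ) = 0 := by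
    have hsym : (inner ℂ (Q u) (Q u) : ℂ) = inner ℂ u (Q (Q u)) := hQsa.isSymmetric u (Q u)
    rw [he, hv, inner_sub_left, hsym, hQQ, sub_self]
  -- Pythagoras
  have hpyth : ‖e‖ ^ 2 + ‖v‖ ^ 2 = 1 := by
    have : ‖e + v‖ * ‖e + v‖ = ‖e‖ * ‖e‖ + ‖v‖ * ‖v‖ :=
      norm_add_sq_eq_norm_sq_add_norm_sq_of_inner_eq_zero e v horth
    rw [show e + v = u by rw [he, hv]; abel, hu] at this
    nlinarith [this]
  have hve : 0 ≤ ‖e‖ := norm_nonneg e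
  have hε2 : 0 < 1 - ε ^ 2 := by nlinarith
  have hsqrt : 0 < Real.sqrt (1 - ε ^ 2) := Real.sqrt_pos.mpr hε2
  have hvlow : Real.sqrt (1 - ε ^ 2) < ‖v‖ := by
    have h1 : 1 - ε ^ 2 < ‖v‖ ^ 2 := by nlinarith
    calc Real.sqrt (1 - ε ^ 2) < Real.sqrt (‖v‖ ^ 2) := Real.sqrt_lt_sqrt hε2.le h1
    _ = ‖v‖ := Real.sqrt_sq (norm_nonneg v)
  -- the residual bound
  have hres : ‖S v - (lam : ℂ) • v‖ < ε := by
    have hSv : S v = (lam : ℂ) • v - Q (T e) := by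
      have h1 : S v = Q (T (Q (Q u))) := rfl
      rw [h1, hQQ, show Q u = u - e by rw [he]; abel, map_sub, hTu, map_sub, map_smul]
    rw [hSv, sub_sub_cancel_left, norm_neg]
    calc ‖Q (T e)‖ ≤ ‖T e‖ := hQnorm _
    _ ≤ ‖T‖ * ‖e‖ := T.le_opNorm e
    _ ≤ 1 * ‖e‖ := mul_le_mul_of_nonneg_right hTnorm hve
    _ = ‖e‖ := one_mul _
    _ < ε := hQu
  -- main contradiction argument
  by_contra hcon
  push_neg at hcon
  set δ := ε / Real.sqrt (1 - ε ^ 2) with hδdef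
  have hδpos : 0 < δ := div_pos hε0 hsqrt
  have hspec : ∀ z ∈ spectrum ℂ S, δ ≤ ‖z - (lam : ℂ)‖ := by
    intro z hz
    have hzre : z = (z.re : ℂ) := hSsa.mem_spectrum_eq_re hz
    have hmem : ((z.re : ℝ) : ℂ) ∈ spectrum ℂ S := hzre ▸ hz
    have := hcon z.re hmem
    have habs : ‖z - (lam : ℂ)‖ = |z.re - lam| := by
      nth_rewrite 1 [hzre]
      rw [← Complex.ofReal_sub, Complex.norm_real, Real.norm_eq_abs]
    rw [habs, abs_sub_comm]
    exact this
  have hkey := aux_resolvent_bound S hSsa lam δ hδpos hspec v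
  have : ε < δ * ‖v‖ := by
    have : δ * Real.sqrt (1 - ε ^ 2) = ε := by
      rw [hδdef]; field_simp
    nlinarith
  linarith
end

section
/- Let H be a Hilbert space, Q : H → H the orthogonal projection onto a closed subspace, and T : H → H a bounded linear operator with ‖T‖ ≤ 1. Suppose u ∈ H satisfies ‖u‖ = 1 and T u = λ u for a scalar λ, and suppose ‖u − Q u‖ < ε for some ε with 0 < ε < 1. Then Q u ≠ 0, and the normalized vector u' := Q u / ‖Q u‖ satisfies ‖(Q T Q) u' − λ u'‖ < ε / √(1 − ε²). -/
open RCLike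

/-- Second estimate in the eigenvalue-perturbation lemma: if `Q` is an orthogonal projection
(self-adjoint idempotent bounded operator) on a Hilbert space, `T` is a bounded operator with
`‖T‖ ≤ 1`, `u` is a unit eigenvector of `T` with eigenvalue `λ`, and `‖u - Qu‖ < ε` with
`0 < ε < 1`, then `Qu ≠ 0` and the normalized vector `u' = Qu / ‖Qu‖` satisfies
`‖(QTQ) u' - λ u'‖ < ε / √(1 - ε²)`. -/
theorem compressed_operator_normalized_defect
    {𝕜 H : Type*} [RCLike 𝕜] [NormedAddCommGroup H] [InnerProductSpace 𝕜 H] [CompleteSpace H]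
    (Q : H →L[𝕜] H) (hQidem : Q ∘L Q = Q) (hQsa : IsSelfAdjoint Q)
    (T : H →L[𝕜] H) (hTnorm : ‖T‖ ≤ 1)
    (u : H) (hu : ‖u‖ = 1) (lam : 𝕜) (hTu : T u = lam • u)
    (ε : ℝ) (hε0 : 0 < ε) (hε1 : ε < 1) (hQu : ‖u - Q u‖ < ε) :
    Q u ≠ 0 ∧
      ‖(Q ∘L T ∘L Q) ((‖Q u‖ : 𝕜)⁻¹ • Q u) - lam • ((‖Q u‖ : 𝕜)⁻¹ • Q u)‖
        < ε / Real.sqrt (1 - ε ^ 2) := by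
  have hQQ : ∀ x, Q (Q x) = Q x := fun x => by
    have := ContinuousLinearMap.ext_iff.mp hQidem x
    simpa using this
  have hsym : (Q : H →ₗ[𝕜] H).IsSymmetric :=
    (ContinuousLinearMap.isSelfAdjoint_iff_isSymmetric.mp hQsa)
  -- Q is a contraction
  have hQcontr : ∀ x : H, ‖Q x‖ ≤ ‖x‖ := by
    intro x
    rcases eq_or_ne (Q x) 0 with h | h
    · simp [h]
    · have h1 : (‖Q x‖ : ℝ) ^ 2 = re ((inner 𝕜 (Q x) (Q x) : 𝕜)) :=
        (inner_self_eq_norm_sq (𝕜 := 𝕜) (Q x)).symm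
      have h2 : (inner 𝕜 (Q x) (Q x) : 𝕜) = (inner 𝕜 x (Q x) : 𝕜) := by
        have hx := hsym x (Q x)
        simp only [ContinuousLinearMap.coe_coe] at hx
        rw [hQQ] at hx
        exact hx
      have h3 : re ((inner 𝕜 x (Q x) : 𝕜)) ≤ ‖x‖ * ‖Q x‖ := by
        calc re ((inner 𝕜 x (Q x) : 𝕜)) ≤ ‖(inner 𝕜 x (Q x) : 𝕜)‖ := re_le_norm _
          _ ≤ ‖x‖ * ‖Q x‖ := norm_inner_le_norm _ _
      have h4 : ‖Q x‖ ^ 2 ≤ ‖x‖ * ‖Q x‖ := by rw [h1, h2]; exact h3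
      have hpos : 0 < ‖Q x‖ := norm_pos_iff.mpr h
      nlinarith
  -- orthogonality of Qu and u - Qu
  have horth : (inner 𝕜 (Q u) (u - Q u) : 𝕜) = 0 := by
    have hx := hsym u (u - Q u)
    simp only [ContinuousLinearMap.coe_coe] at hx
    rw [hx, map_sub, hQQ]
    simp
  -- Pythagoras
  have hpyth : ‖Q u‖ * ‖Q u‖ + ‖u - Q u‖ * ‖u - Q u‖ = 1 := by
    have := norm_add_sq_eq_norm_sq_add_norm_sq_of_inner_eq_zero (Q u) (u - Q u) horth
    rw [add_sub_cancel] at this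
    rw [← this, hu]; ring
  have hone : 0 < 1 - ε ^ 2 := by nlinarith
  have hsq : 1 - ε ^ 2 < ‖Q u‖ ^ 2 := by
    have h5 : ‖u - Q u‖ * ‖u - Q u‖ < ε * ε := mul_self_lt_mul_self (norm_nonneg _) hQu
    nlinarith
  have hsqrtpos : 0 < Real.sqrt (1 - ε ^ 2) := Real.sqrt_pos.mpr hone
  have hQupos : 0 < ‖Q u‖ := by nlinarith [norm_nonneg (Q u)]
  have hQune : Q u ≠ 0 := norm_pos_iff.mp hQupos
  have hQugt : Real.sqrt (1 - ε ^ 2) < ‖Q u‖ := by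
    calc Real.sqrt (1 - ε ^ 2) < Real.sqrt (‖Q u‖ ^ 2) := Real.sqrt_lt_sqrt hone.le hsq
      _ = ‖Q u‖ := Real.sqrt_sq hQupos.le
  refine ⟨hQune, ?_⟩
  -- simplify the defect vector
  have hc : ((‖Q u‖ : 𝕜) ≠ 0) := by
    simp only [ne_eq, RCLike.ofReal_eq_zero]
    exact ne_of_gt hQupos
  have key : (Q ∘L T ∘L Q) ((‖Q u‖ : 𝕜)⁻¹ • Q u) - lam • ((‖Q u‖ : 𝕜)⁻¹ • Q u)
      = (‖Q u‖ : 𝕜)⁻¹ • (Q (T (Q u - u))) := by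
    have h1 : Q (T (Q u - u)) = Q (T (Q u)) - lam • Q u := by
      rw [map_sub, map_sub, hTu, map_smul]
    rw [h1]
    simp only [ContinuousLinearMap.comp_apply, map_smul, smul_sub, hQQ]
    rw [smul_comm lam ((‖Q u‖ : 𝕜)⁻¹)]
  rw [key, norm_smul]
  have hbound : ‖Q (T (Q u - u))‖ < ε := by
    calc ‖Q (T (Q u - u))‖ ≤ ‖T (Q u - u)‖ := hQcontr _
      _ ≤ ‖T‖ * ‖Q u - u‖ := T.le_opNorm _
      _ ≤ 1 * ‖Q u - u‖ := by
          apply mul_le_mul_of_nonneg_right hTnorm (norm_nonneg _)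
      _ = ‖u - Q u‖ := by rw [one_mul, norm_sub_rev]
      _ < ε := hQu
  have hnc : ‖((‖Q u‖ : 𝕜)⁻¹)‖ = (‖Q u‖)⁻¹ := by
    rw [norm_inv, RCLike.norm_ofReal, abs_of_pos hQupos]
  rw [hnc]
  have h1 : (‖Q u‖)⁻¹ * ‖Q (T (Q u - u))‖ < (‖Q u‖)⁻¹ * ε :=
    mul_lt_mul_of_pos_left hbound (inv_pos.mpr hQupos)
  have h2 : (‖Q u‖)⁻¹ * ε < ε / Real.sqrt (1 - ε ^ 2) := by
    rw [div_eq_mul_inv, mul_comm ε]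
    exact mul_lt_mul_of_pos_right (inv_strictAnti₀ hsqrtpos hQugt) hε0
  linarith
end

section
/- Let ρ : ℝⁿ → ℝ be measurable with ρ(x) > 0 for Lebesgue-almost every x and ∫ ρ dx = 1, and let μ be the measure with density ρ with respect to Lebesgue measure. Let p : ℝⁿ × ℝⁿ → ℝ be measurable and nonnegative, let φ : ℝⁿ → ℝ be measurable with ∫ φ² dμ = 1, and let λ ∈ ℝ with λ ≠ 0. Fix ε ≥ 0 and two points x, y ∈ ℝⁿ, and assume: (i) z ↦ φ(z)·p(x,z) and z ↦ φ(z)·p(y,z) are Lebesgue-integrable with λ φ(x) = ∫ φ(z) p(x,z) dz and λ φ(y) = ∫ φ(z) p(y,z) dz; (ii) there exists a measurable g : ℝⁿ → ℝ with ∫ (p(x,z) − g(z))² / ρ(z) dz ≤ ε² and ∫ (p(y,z) − g(z))² / ρ(z) dz ≤ ε². Then |φ(x) − φ(y)| ≤ 2ε / |λ|. -/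
open MeasureTheory

lemma cs_aux {n : ℕ} {ρ φ q : (Fin n → ℝ) → ℝ} (hρpos : ∀ᵐ z, 0 < ρ z)
    (hρm : Measurable ρ) (hφm : Measurable φ) (hqm : Measurable q) {ε : ℝ} (hε : 0 ≤ ε)
    (hφnorm : ∫⁻ z, ENNReal.ofReal (ρ z) * ENNReal.ofReal (φ z ^ 2) = 1)
    (hq : ∫⁻ z, ENNReal.ofReal (q z ^ 2 / ρ z) ≤ ENNReal.ofReal (ε ^ 2)) :
    ∫⁻ z, ENNReal.ofReal (|φ z| * |q z|) ≤ ENNReal.ofReal ε := by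
  set f : (Fin n → ℝ) → ENNReal := fun z => ENNReal.ofReal (φ z ^ 2 * ρ z) ^ (1/2 : ℝ) with hf
  set g : (Fin n → ℝ) → ENNReal := fun z => ENNReal.ofReal (q z ^ 2 / ρ z) ^ (1/2 : ℝ) with hg
  have hfm : Measurable f := ((hφm.pow_const 2).mul hρm).ennreal_ofReal.pow_const _
  have hgm : Measurable g := ((hqm.pow_const 2).div hρm).ennreal_ofReal.pow_const _
  have hae : ∀ᵐ z, ENNReal.ofReal (|φ z| * |q z|) = (f * g) z := by
    filter_upwards [hρpos] with z hz
    simp only [hf, hg, Pi.mul_apply]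
    rw [← ENNReal.mul_rpow_of_nonneg _ _ (by norm_num : (0:ℝ) ≤ 1/2),
      ← ENNReal.ofReal_mul (by positivity)]
    have h2 : φ z ^ 2 * ρ z * (q z ^ 2 / ρ z) = (|φ z| * |q z|) ^ 2 := by
      rw [mul_pow, sq_abs, sq_abs]; field_simp
    rw [h2, ENNReal.ofReal_pow (by positivity), ← ENNReal.rpow_natCast _ 2,
      ← ENNReal.rpow_mul]
    norm_num
  calc ∫⁻ z, ENNReal.ofReal (|φ z| * |q z|) = ∫⁻ z, (f * g) z := lintegral_congr_ae hae
    _ ≤ (∫⁻ z, f z ^ (2:ℝ)) ^ (1/2:ℝ) * (∫⁻ z, g z ^ (2:ℝ)) ^ (1/2:ℝ) :=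
        ENNReal.lintegral_mul_le_Lp_mul_Lq volume ⟨by norm_num, by norm_num, by norm_num⟩
          hfm.aemeasurable hgm.aemeasurable
    _ ≤ 1 ^ (1/2:ℝ) * (ENNReal.ofReal (ε ^ 2)) ^ (1/2:ℝ) := by
        have hf2 : ∀ z, f z ^ (2:ℝ) = ENNReal.ofReal (φ z ^ 2 * ρ z) := by
          intro z; rw [hf, ← ENNReal.rpow_mul]; norm_num
        have hg2 : ∀ z, g z ^ (2:ℝ) = ENNReal.ofReal (q z ^ 2 / ρ z) := by
          intro z; rw [hg, ← ENNReal.rpow_mul]; norm_num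
        have e1 : ∫⁻ z, f z ^ (2:ℝ) = 1 := by
          simp_rw [hf2]
          rw [← hφnorm]
          congr 1; funext z
          rw [ENNReal.ofReal_mul (sq_nonneg _), mul_comm]
        have e2 : (∫⁻ z, g z ^ (2:ℝ)) ≤ ENNReal.ofReal (ε ^ 2) := by
          simp_rw [hg2]; exact hq
        rw [e1]
        exact mul_le_mul_right
          (ENNReal.rpow_le_rpow e2 (by norm_num)) _
    _ = ENNReal.ofReal ε := by
        rw [ENNReal.one_rpow, one_mul, ENNReal.ofReal_pow hε, ← ENNReal.rpow_natCast _ 2,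
          ← ENNReal.rpow_mul]
        norm_num

/-- If `φ` is a normalized pointwise eigenfunction (with eigenvalue `λ ≠ 0`) of the Koopman
operator with transition density `p`, and the transition densities `p(x,·)` and `p(y,·)` are
both `ε`-close in the `L²_{1/μ}` norm to a common function `g`, then
`|φ(x) - φ(y)| ≤ 2ε / |λ|`. -/
theorem eigenfunction_almost_constant_on_fibers
    {n : ℕ} (ρ : (Fin n → ℝ) → ℝ) (hρm : Measurable ρ)
    (hρpos : ∀ᵐ x, 0 < ρ x) (hρ1 : ∫ x, ρ x = 1)
    (p : (Fin n → ℝ) → (Fin n → ℝ) → ℝ)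
    (hpm : Measurable (Function.uncurry p)) (hpnn : ∀ x y, 0 ≤ p x y)
    (φ : (Fin n → ℝ) → ℝ) (hφm : Measurable φ)
    (hφnorm : ∫⁻ z, ENNReal.ofReal ((φ z) ^ 2)
        ∂(MeasureTheory.volume.withDensity fun z => ENNReal.ofReal (ρ z)) = 1)
    (lam : ℝ) (hlam : lam ≠ 0) (ε : ℝ) (hε : 0 ≤ ε)
    (x y : Fin n → ℝ)
    (hix : Integrable (fun z => φ z * p x z)) (hiy : Integrable (fun z => φ z * p y z))
    (heigx : lam * φ x = ∫ z, φ z * p x z)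
    (heigy : lam * φ y = ∫ z, φ z * p y z)
    (hg : ∃ g : (Fin n → ℝ) → ℝ, Measurable g ∧
      (∫⁻ z, ENNReal.ofReal ((p x z - g z) ^ 2 / ρ z)) ≤ ENNReal.ofReal (ε ^ 2) ∧
      (∫⁻ z, ENNReal.ofReal ((p y z - g z) ^ 2 / ρ z)) ≤ ENNReal.ofReal (ε ^ 2)) :
    |φ x - φ y| ≤ 2 * ε / |lam| := by
  obtain ⟨g, hgm, hgx, hgy⟩ := hg
  have hpxm : Measurable (p x) := hpm.comp measurable_prodMk_left
  have hpym : Measurable (p y) := hpm.comp measurable_prodMk_left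
  -- rewrite the normalization as a plain lintegral
  rw [lintegral_withDensity_eq_lintegral_mul _ hρm.ennreal_ofReal
      (hφm.pow_const 2).ennreal_ofReal] at hφnorm
  have hφnorm' : ∫⁻ z, ENNReal.ofReal (ρ z) * ENNReal.ofReal (φ z ^ 2) = 1 := by
    rw [← hφnorm]; rfl
  have hA := cs_aux hρpos hρm hφm (hpxm.sub hgm) hε hφnorm' hgx
  have hB := cs_aux hρpos hρm hφm (hpym.sub hgm) hε hφnorm' hgy
  -- the difference integrand
  have hIdiff : Integrable (fun z => φ z * (p x z - p y z)) := by
    have := hix.sub hiy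
    simpa [mul_sub, Pi.sub_def] using this
  have hId : ∫ z, φ z * (p x z - p y z) = lam * φ x - lam * φ y := by
    rw [heigx, heigy, ← integral_sub hix hiy]
    simp [mul_sub]
  -- bound the lintegral of the absolute value
  have key : ∫⁻ z, ENNReal.ofReal (|φ z| * |p x z - p y z|) ≤ ENNReal.ofReal (2 * ε) := by
    have hmono : ∀ z, ENNReal.ofReal (|φ z| * |p x z - p y z|)
        ≤ ENNReal.ofReal (|φ z| * |p x z - g z|) + ENNReal.ofReal (|φ z| * |p y z - g z|) := by
      intro z
      calc ENNReal.ofReal (|φ z| * |p x z - p y z|)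
          ≤ ENNReal.ofReal (|φ z| * |p x z - g z| + |φ z| * |p y z - g z|) := by
            apply ENNReal.ofReal_le_ofReal
            rw [← mul_add]
            refine mul_le_mul_of_nonneg_left ?_ (abs_nonneg _)
            calc |p x z - p y z| ≤ |p x z - g z| + |g z - p y z| := abs_sub_le _ _ _
              _ = |p x z - g z| + |p y z - g z| := by rw [abs_sub_comm (g z)]
        _ ≤ _ := ENNReal.ofReal_add_le
    calc ∫⁻ z, ENNReal.ofReal (|φ z| * |p x z - p y z|)
        ≤ ∫⁻ z, (ENNReal.ofReal (|φ z| * |p x z - g z|)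
            + ENNReal.ofReal (|φ z| * |p y z - g z|)) := lintegral_mono hmono
      _ = (∫⁻ z, ENNReal.ofReal (|φ z| * |p x z - g z|))
            + ∫⁻ z, ENNReal.ofReal (|φ z| * |p y z - g z|) := by
          apply lintegral_add_left
          exact (hφm.abs.mul (hpxm.sub hgm).abs).ennreal_ofReal
      _ ≤ ENNReal.ofReal ε + ENNReal.ofReal ε := add_le_add hA hB
      _ = ENNReal.ofReal (2 * ε) := by rw [← ENNReal.ofReal_add hε hε]; ring_nf
  -- back to real integrals
  have habs : ∫ z, |φ z * (p x z - p y z)| ≤ 2 * ε := by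
    rw [← ENNReal.ofReal_le_ofReal_iff (by positivity),
      ofReal_integral_eq_lintegral_ofReal hIdiff.abs
        (Filter.Eventually.of_forall fun z => abs_nonneg _)]
    simpa [abs_mul] using key
  have hle : |lam| * |φ x - φ y| ≤ 2 * ε := by
    have h1 : |lam| * |φ x - φ y| = |∫ z, φ z * (p x z - p y z)| := by
      rw [hId, ← mul_sub, abs_mul]
    rw [h1]
    have h2 := norm_integral_le_integral_norm (μ := volume) (fun z => φ z * (p x z - p y z))
    simp only [Real.norm_eq_abs] at h2
    exact h2.trans habs
  rw [div_eq_inv_mul, ← mul_le_mul_iff_right₀ (a := |lam|) (abs_pos.2 hlam), ← mul_assoc,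
    mul_inv_cancel₀ (abs_ne_zero.2 hlam), one_mul]
  exact hle
end
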